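/- Consider the three-action, three-state persuasion instance parametrized by δ ∈ (0, 1/4): states are θ_1, θ_2, θ_3; the receiver's payoff is r_i(θ_j) = 1 if i = j and 0 otherwise; the sender's payoff is s_3(θ) = 1 and s_1(θ) = s_2(θ) = 0 in every state. Let λ assign probabilities (1−2δ, 2δ, 0) and λ' assign probabilities (1−2δ, δ, δ) to (θ_1, θ_2, θ_3). Then: (i) the maximum expected sender utility over incentive-compatible direct schemes for λ' equals 3δ; (ii) for any c ∈ [0, 1/4), every c-incentive-compatible direct scheme φ' for λ' with expected sender utility at least 3δ satisfies φ'(θ_2, σ_3) ≥ 1 − 4c; and (iii) for any c ∈ [0, 1/2), every c-incentive-compatible direct scheme φ for λ satisfies φ(θ_1, σ_3) = 0 and φ(θ_2, σ_3) = 0. -/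

import Mathlib

open Finset

namespace ThreeActions

-- states: `Fin 3` (θ_1, θ_2, θ_3); actions: `Fin 3` (actions 1, 2, 3, where
-- action `2` — the third action — is the sender's favorite)

/-- receiver payoffs: action `i` pays `1` in state `θ_i` and `0` otherwise -/
def rcv (θ i : Fin 3) : ℝ := if i = θ then 1 else 0

/-- sender payoffs: action `3` (index `2`) pays `1` and the others pay `0`,
in every state -/
def snd (_θ i : Fin 3) : ℝ := if i = 2 then 1 else 0

/-- the distribution `λ = (1 − 2δ, 2δ, 0)` -/
noncomputable def lam (δ : ℝ) : Fin 3 → ℝ := ![1 - 2 * δ, 2 * δ, 0]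

/-- the distribution `λ' = (1 − 2δ, δ, δ)` -/
noncomputable def lam' (δ : ℝ) : Fin 3 → ℝ := ![1 - 2 * δ, δ, δ]

/-- a direct signaling scheme: signal `i` recommends action `i` -/
def IsScheme (φ : Fin 3 → Fin 3 → ℝ) : Prop :=
  (∀ θ i, 0 ≤ φ θ i) ∧ ∀ θ, ∑ i, φ θ i = 1

/-- `c`-incentive compatibility for the distribution `μ` (`c = 0` is exact IC) -/
def CIC (c : ℝ) (μ : Fin 3 → ℝ) (φ : Fin 3 → Fin 3 → ℝ) : Prop :=
  ∀ i j : Fin 3, ∑ θ, μ θ * φ θ i * (rcv θ j - c) ≤ ∑ θ, μ θ * φ θ i * rcv θ i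

/-- expected sender utility -/
def senderUtil (μ : Fin 3 → ℝ) (φ : Fin 3 → Fin 3 → ℝ) : ℝ :=
  ∑ θ, ∑ i, μ θ * φ θ i * snd θ i

end ThreeActions

open ThreeActions

/-- in the three-action instance with parameter `δ ∈ (0, 1/4)`:
(i) the maximum expected sender utility over incentive-compatible direct schemes for
`λ'` equals `3δ`; (ii) for `c ∈ [0, 1/4)`, every `c`-incentive-compatible scheme for
`λ'` with expected sender utility at least `3δ` satisfies `φ'(θ_2, σ_3) ≥ 1 − 4c`; and
(iii) for `c ∈ [0, 1/2)`, every `c`-incentive-compatible scheme for `λ` satisfies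
`φ(θ_1, σ_3) = 0` and `φ(θ_2, σ_3) = 0`. -/
theorem three_action_instance (δ : ℝ) (hδ0 : 0 < δ) (hδ1 : δ < 1 / 4) :
    IsGreatest {u : ℝ | ∃ φ : Fin 3 → Fin 3 → ℝ,
        IsScheme φ ∧ CIC 0 (lam' δ) φ ∧ u = senderUtil (lam' δ) φ}
      (3 * δ) ∧
    (∀ c : ℝ, 0 ≤ c → c < 1 / 4 →
      ∀ φ' : Fin 3 → Fin 3 → ℝ, IsScheme φ' → CIC c (lam' δ) φ' →
        3 * δ ≤ senderUtil (lam' δ) φ' → 1 - 4 * c ≤ φ' 1 2) ∧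
    (∀ c : ℝ, 0 ≤ c → c < 1 / 2 →
      ∀ φ : Fin 3 → Fin 3 → ℝ, IsScheme φ → CIC c (lam δ) φ →
        φ 0 2 = 0 ∧ φ 1 2 = 0) := by
  have h2 : (0:ℝ) < 1 - 2*δ := by linarith
  have h2' : (1:ℝ) - 2*δ ≠ 0 := ne_of_gt h2
  refine ⟨⟨?_, ?_⟩, ?_, ?_⟩
  · -- membership
    refine ⟨fun θ i => if θ = 0 then
        (if i = 0 then 1 - δ/(1-2*δ) else if i = 2 then δ/(1-2*δ) else 0)
        else if i = 2 then 1 else 0, ⟨?_, ?_⟩, ?_, ?_⟩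
    · intro θ i
      fin_cases θ <;> fin_cases i <;> simp <;> [skip; positivity] <;>
        rw [div_le_one h2] <;> linarith
    · intro θ; fin_cases θ <;> simp [Fin.sum_univ_three]
    · intro i j
      fin_cases i <;> fin_cases j <;>
        simp [rcv, lam', Fin.sum_univ_three] <;> field_simp <;> nlinarith
    · simp [senderUtil, lam', snd, Fin.sum_univ_three]
      field_simp [show (1:ℝ) - δ*2 ≠ 0 by linarith]; ring
  · -- upper bound
    rintro u ⟨φ, ⟨hpos, hsum⟩, hIC, rfl⟩
    have h20 := hIC 2 0
    have h21 := hIC 2 1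
    simp [rcv, lam', Fin.sum_univ_three] at h20 h21
    have hs2 := hsum 2
    simp [Fin.sum_univ_three] at hs2
    have h22 : φ 2 2 ≤ 1 := by
      have := hpos 2 0; have := hpos 2 1; linarith
    simp [senderUtil, lam', snd, Fin.sum_univ_three]
    nlinarith [hpos 0 2, hpos 1 2]
  · -- part (ii)
    intro c hc0 hc1 φ ⟨hpos, hsum⟩ hIC hu
    have h20 := hIC 2 0
    have h21 := hIC 2 1
    simp [rcv, lam', Fin.sum_univ_three] at h20 h21
    simp [senderUtil, lam', snd, Fin.sum_univ_three] at hu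
    have hM1 : (1-2*δ) * φ 0 2 + δ * φ 1 2 + δ * φ 2 2 ≤ 1 := by
      have p0 : φ 0 2 ≤ 1 := by
        have := hpos 0 0; have := hpos 0 1; have hs := hsum 0
        simp [Fin.sum_univ_three] at hs; linarith
      have p1 : φ 1 2 ≤ 1 := by
        have := hpos 1 0; have := hpos 1 1; have hs := hsum 1
        simp [Fin.sum_univ_three] at hs; linarith
      have p2 : φ 2 2 ≤ 1 := by
        have := hpos 2 0; have := hpos 2 1; have hs := hsum 2
        simp [Fin.sum_univ_three] at hs; linarith
      nlinarith
    have p2 : φ 2 2 ≤ 1 := by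
      have := hpos 2 0; have := hpos 2 1; have hs := hsum 2
      simp [Fin.sum_univ_three] at hs; linarith
    -- M(1-c) ≤ 2δ φ22 + δ φ12, M ≥ 3δ ⇒ φ12 ≥ 1-3c ≥ 1-4c
    nlinarith [hpos 1 2, hpos 0 2, hpos 2 2]
  · -- part (iii)
    intro c hc0 hc1 φ ⟨hpos, hsum⟩ hIC
    have h20 := hIC 2 0
    have h21 := hIC 2 1
    simp [rcv, lam, Fin.sum_univ_three] at h20 h21
    have n0 := hpos 0 2; have n1 := hpos 1 2
    have ha : 0 ≤ (1-2*δ) * φ 0 2 := mul_nonneg h2.le n0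
    have hb : 0 ≤ 2*δ * φ 1 2 := mul_nonneg (by linarith) n1
    have hab : (1-2*δ) * φ 0 2 + 2*δ * φ 1 2 ≤ 0 := by nlinarith
    have ea : (1-2*δ) * φ 0 2 = 0 := le_antisymm (by linarith) ha
    have eb : (2*δ) * φ 1 2 = 0 := le_antisymm (by linarith) hb
    exact ⟨(mul_eq_zero.mp ea).resolve_left h2',
      (mul_eq_zero.mp eb).resolve_left (by positivity)⟩
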